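/- Let u, v be positive reals with u/v irrational, u+v = α and 1/u+1/v = β positive integers. If α = 1, or (α,β) ∈ {(3,3),(2,4)}, then the Ehrhart function of T_{u,v} is a polynomial in t, namely I(t) = (β/(2α))t² + (β/2)t + 1. -/

import Mathlib

noncomputable def ehrhart (u v : ℝ) (t : ℕ) : ℕ :=
  {p : ℕ × ℕ | u * p.1 + v * p.2 ≤ t}.ncard

section helpers

variable {u v : ℝ}

lemma eh_finite (hu : 0 < u) (hv : 0 < v) (t : ℕ) :
    {p : ℕ × ℕ | u * p.1 + v * p.2 ≤ (t : ℝ)}.Finite := by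
  apply Set.Finite.subset
    ((Set.finite_Iic (⌊(t : ℝ) / u⌋₊)).prod (Set.finite_Iic (⌊(t : ℝ) / v⌋₊)))
  rintro ⟨x, y⟩ h
  simp only [Set.mem_setOf_eq] at h
  have hx0 : (0:ℝ) ≤ (x:ℝ) := Nat.cast_nonneg x
  have hy0 : (0:ℝ) ≤ (y:ℝ) := Nat.cast_nonneg y
  constructor
  · simp only [Set.mem_Iic]
    apply Nat.le_floor
    rw [le_div_iff₀ hu]
    nlinarith [mul_nonneg hv.le hy0]
  · simp only [Set.mem_Iic]
    apply Nat.le_floor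
    rw [le_div_iff₀ hv]
    nlinarith [mul_nonneg hu.le hx0]

lemma count_vert (c s : ℝ) (hc : 0 < c) (hs : 0 ≤ s) :
    {y : ℕ | c * y ≤ s}.ncard = ⌊s / c⌋₊ + 1 := by
  have h : {y : ℕ | c * y ≤ s} = ↑(Finset.Iic ⌊s / c⌋₊) := by
    ext y
    simp only [Set.mem_setOf_eq, Finset.coe_Iic, Set.mem_Iic]
    rw [Nat.le_floor_iff (by positivity), le_div_iff₀ hc, mul_comm]
  rw [h, Set.ncard_coe_finset, Nat.card_Iic]

lemma count_horiz (c s : ℝ) (hc : 0 < c) (hs : 0 ≤ s) :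
    {x : ℕ | x ≠ 0 ∧ c * x ≤ s}.ncard = ⌊s / c⌋₊ := by
  have h : {x : ℕ | x ≠ 0 ∧ c * x ≤ s} = ↑(Finset.Icc 1 ⌊s / c⌋₊) := by
    ext x
    simp only [Set.mem_setOf_eq, Finset.coe_Icc, Set.mem_Icc]
    rw [Nat.le_floor_iff (by positivity), le_div_iff₀ hc, mul_comm]
    constructor
    · rintro ⟨h1, h2⟩; exact ⟨Nat.one_le_iff_ne_zero.2 h1, h2⟩
    · rintro ⟨h1, h2⟩; exact ⟨Nat.one_le_iff_ne_zero.1 h1, h2⟩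
  rw [h, Set.ncard_coe_finset, Nat.card_Icc]; omega

lemma floor_sum (hu : 0 < u) (hv : 0 < v) (hiu : Irrational u) (hiv : Irrational v)
    (β T : ℕ) (hT : T ≠ 0) (hinv : 1 / u + 1 / v = (β : ℝ)) :
    ⌊(T : ℝ) / u⌋₊ + ⌊(T : ℝ) / v⌋₊ + 1 = β * T := by
  have h1 : Irrational ((T : ℝ) / u) := hiu.natCast_div hT
  have h2 : Irrational ((T : ℝ) / v) := hiv.natCast_div hT
  have e : (T : ℝ) / u + (T : ℝ) / v = (β : ℝ) * T := by
    field_simp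
    field_simp at hinv
    nlinarith [hinv]
  have l1 : (⌊(T : ℝ) / u⌋₊ : ℝ) < (T : ℝ) / u :=
    lt_of_le_of_ne (Nat.floor_le (by positivity)) (fun h => (h1.ne_nat _ h.symm))
  have l2 : (⌊(T : ℝ) / v⌋₊ : ℝ) < (T : ℝ) / v :=
    lt_of_le_of_ne (Nat.floor_le (by positivity)) (fun h => (h2.ne_nat _ h.symm))
  have u1 : (T : ℝ) / u < ⌊(T : ℝ) / u⌋₊ + 1 := Nat.lt_floor_add_one _
  have u2 : (T : ℝ) / v < ⌊(T : ℝ) / v⌋₊ + 1 := Nat.lt_floor_add_one _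
  have lo : ((⌊(T : ℝ) / u⌋₊ + ⌊(T : ℝ) / v⌋₊ : ℕ) : ℝ) < ((β * T : ℕ) : ℝ) := by
    push_cast; linarith
  have hi : ((β * T : ℕ) : ℝ) < ((⌊(T : ℝ) / u⌋₊ + ⌊(T : ℝ) / v⌋₊ + 2 : ℕ) : ℝ) := by
    push_cast; linarith
  have lo' := Nat.cast_lt.mp lo
  have hi' := Nat.cast_lt.mp hi
  omega

lemma eh_zero (hu : 0 < u) (hv : 0 < v) : ehrhart u v 0 = 1 := by
  unfold ehrhart
  have h : {p : ℕ × ℕ | u * p.1 + v * p.2 ≤ ((0:ℕ) : ℝ)} = {((0:ℕ), (0:ℕ))} := by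
    ext ⟨x, y⟩
    simp only [Set.mem_setOf_eq, Set.mem_singleton_iff, Prod.mk.injEq, Nat.cast_zero]
    constructor
    · intro h
      have hx0 : (0:ℝ) ≤ (x:ℝ) := Nat.cast_nonneg x
      have hy0 : (0:ℝ) ≤ (y:ℝ) := Nat.cast_nonneg y
      constructor
      · by_contra hx
        have : (1:ℝ) ≤ (x:ℝ) := by exact_mod_cast Nat.one_le_iff_ne_zero.2 hx
        nlinarith [mul_nonneg hv.le hy0]
      · by_contra hy
        have : (1:ℝ) ≤ (y:ℝ) := by exact_mod_cast Nat.one_le_iff_ne_zero.2 hy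
        nlinarith [mul_nonneg hu.le hx0]
    · rintro ⟨rfl, rfl⟩
      norm_num
  rw [h, Set.ncard_singleton]

lemma eh_big (hu : 0 < u) (hv : 0 < v) (t : ℕ) (ht : (t : ℝ) < u) :
    ehrhart u v t = ⌊(t : ℝ) / v⌋₊ + 1 := by
  unfold ehrhart
  have hset : {p : ℕ × ℕ | u * p.1 + v * p.2 ≤ (t : ℝ)}
      = (fun y : ℕ => ((0:ℕ), y)) '' {y : ℕ | v * y ≤ (t : ℝ)} := by
    ext ⟨x, y⟩
    simp only [Set.mem_setOf_eq, Set.mem_image, Prod.mk.injEq]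
    constructor
    · intro h
      have hy0 : (0:ℝ) ≤ (y:ℝ) := Nat.cast_nonneg y
      have hx : x = 0 := by
        by_contra hx
        have : (1:ℝ) ≤ (x:ℝ) := by exact_mod_cast Nat.one_le_iff_ne_zero.2 hx
        nlinarith [mul_nonneg hv.le hy0]
      subst hx
      exact ⟨y, by simpa using h, rfl, rfl⟩
    · rintro ⟨y', hy', rfl, rfl⟩
      simpa using hy'
  rw [hset, Set.ncard_image_of_injective _ (fun a b h => by simpa using h),
    count_vert v (t:ℝ) hv (Nat.cast_nonneg t)]

end helpers

section rec

variable {u v : ℝ}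

lemma eh_rec (hu : 0 < u) (hv : 0 < v) (hiu : Irrational u) (hiv : Irrational v)
    (α β : ℕ) (hα : 0 < α) (hsum : u + v = (α : ℝ)) (hinv : 1 / u + 1 / v = (β : ℝ))
    (s : ℕ) :
    ehrhart u v (s + α) = ehrhart u v s + β * (s + α) := by
  set T : ℕ := s + α with hTdef
  have hT0 : T ≠ 0 := by omega
  have hTr : (0:ℝ) ≤ (T : ℝ) := Nat.cast_nonneg T
  set A : Set (ℕ × ℕ) := (fun y : ℕ => ((0:ℕ), y)) '' {y : ℕ | v * y ≤ (T : ℝ)} with hA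
  set B : Set (ℕ × ℕ) := (fun x : ℕ => (x, (0:ℕ))) '' {x : ℕ | x ≠ 0 ∧ u * x ≤ (T : ℝ)} with hB
  set C : Set (ℕ × ℕ) := (fun p : ℕ × ℕ => (p.1 + 1, p.2 + 1)) ''
      {p : ℕ × ℕ | u * p.1 + v * p.2 ≤ (s : ℝ)} with hC
  have hTα : ((T : ℕ) : ℝ) = (s : ℝ) + (α : ℝ) := by rw [hTdef]; push_cast; ring
  have hunion : {p : ℕ × ℕ | u * p.1 + v * p.2 ≤ (T : ℝ)} = A ∪ B ∪ C := by
    ext ⟨x, y⟩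
    simp only [hA, hB, hC, Set.mem_setOf_eq, Set.mem_union, Set.mem_image, Prod.mk.injEq]
    constructor
    · intro h
      rcases Nat.eq_zero_or_pos x with hx | hx
      · subst hx
        exact Or.inl (Or.inl ⟨y, by simpa using h, rfl, rfl⟩)
      rcases Nat.eq_zero_or_pos y with hy | hy
      · subst hy
        exact Or.inl (Or.inr ⟨x, ⟨by omega, by simpa using h⟩, rfl, rfl⟩)
      refine Or.inr ⟨(x - 1, y - 1), ?_, by omega, by omega⟩
      simp only [Set.mem_setOf_eq]
      have hx1 : ((x - 1 : ℕ) : ℝ) = (x : ℝ) - 1 := by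
        have : (1:ℕ) ≤ x := hx
        push_cast [this]; ring
      have hy1 : ((y - 1 : ℕ) : ℝ) = (y : ℝ) - 1 := by
        have : (1:ℕ) ≤ y := hy
        push_cast [this]; ring
      rw [hx1, hy1]
      rw [hTα] at h
      nlinarith [h, hsum]
    · rintro ((⟨y', hy', rfl, rfl⟩ | ⟨x', ⟨hx0, hx'⟩, rfl, rfl⟩) | ⟨⟨px, py⟩, hp, rfl, rfl⟩)
      · simpa using hy'
      · simp only [Nat.cast_zero, mul_zero, add_zero]; exact hx'
      · simp only [Set.mem_setOf_eq] at hp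
        rw [hTα]
        push_cast
        nlinarith [hp, hsum]
  have hSfin := eh_finite hu hv T
  have hAfin : A.Finite := hSfin.subset (by rw [hunion]; exact fun p hp => Or.inl (Or.inl hp))
  have hBfin : B.Finite := hSfin.subset (by rw [hunion]; exact fun p hp => Or.inl (Or.inr hp))
  have hCfin : C.Finite := hSfin.subset (by rw [hunion]; exact fun p hp => Or.inr hp)
  have hdisj1 : Disjoint A B := by
    rw [Set.disjoint_left]
    rintro ⟨x, y⟩ hA' hB'
    simp only [hA, hB, Set.mem_image, Prod.mk.injEq] at hA' hB'
    obtain ⟨y', _, h1, _⟩ := hA'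
    obtain ⟨x', ⟨hx0, _⟩, h3, _⟩ := hB'
    exact hx0 (by omega)
  have hdisj2 : Disjoint (A ∪ B) C := by
    rw [Set.disjoint_left]
    rintro ⟨x, y⟩ hab hC'
    simp only [hA, hB, hC, Set.mem_union, Set.mem_image, Prod.mk.injEq] at hab hC'
    obtain ⟨⟨px, py⟩, _, h1, h2⟩ := hC'
    rcases hab with ⟨y', _, h3, _⟩ | ⟨x', _, _, h4⟩
    · omega
    · omega
  have hcards : ehrhart u v T = A.ncard + B.ncard + C.ncard := by
    unfold ehrhart
    rw [hunion, Set.ncard_union_eq hdisj2 (hAfin.union hBfin) hCfin,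
      Set.ncard_union_eq hdisj1 hAfin hBfin]
  have hAcard : A.ncard = ⌊(T : ℝ) / v⌋₊ + 1 := by
    rw [hA, Set.ncard_image_of_injective _ (fun a b h => by simpa using h)]
    exact count_vert v (T:ℝ) hv hTr
  have hBcard : B.ncard = ⌊(T : ℝ) / u⌋₊ := by
    rw [hB, Set.ncard_image_of_injective _ (fun a b h => by simpa using h)]
    exact count_horiz u (T:ℝ) hu hTr
  have hCcard : C.ncard = ehrhart u v s := by
    rw [hC, Set.ncard_image_of_injective _ ?_]
    · rfl
    · rintro ⟨a, b⟩ ⟨c, d⟩ h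
      simp only [Prod.mk.injEq] at h
      simp only [Prod.mk.injEq]
      omega
  have hfl := floor_sum hu hv hiu hiv β T hT0 hinv
  rw [hcards, hAcard, hBcard, hCcard]
  omega

end rec

section main

lemma irr_u_of (u v : ℝ) (hv : v ≠ 0) (hirr : Irrational (u / v)) (α : ℕ)
    (hsum : u + v = (α : ℝ)) : Irrational u := by
  by_contra h
  rw [Irrational] at h
  push_neg at h
  obtain ⟨q, hq⟩ := h
  apply hirr
  refine ⟨q / ((α : ℚ) - q), ?_⟩
  have hv' : v = (α : ℝ) - (q : ℝ) := by rw [← hq] at hsum; linarith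
  push_cast
  rw [hv', ← hq]

lemma irr_swap (u v : ℝ) (hirr : Irrational (u / v)) : Irrational (v / u) := by
  by_contra h
  rw [Irrational] at h
  push_neg at h
  obtain ⟨q, hq⟩ := h
  apply hirr
  refine ⟨q⁻¹, ?_⟩
  push_cast
  rw [hq, inv_div]

lemma eh_swap (u v : ℝ) (t : ℕ) : ehrhart u v t = ehrhart v u t := by
  unfold ehrhart
  have h : {p : ℕ × ℕ | v * p.1 + u * p.2 ≤ (t : ℝ)}
      = Prod.swap '' {p : ℕ × ℕ | u * p.1 + v * p.2 ≤ (t : ℝ)} := by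
    ext ⟨x, y⟩
    simp only [Set.mem_setOf_eq, Set.mem_image, Prod.exists, Prod.swap_prod_mk,
      Prod.mk.injEq]
    constructor
    · intro h; exact ⟨y, x, by linarith, rfl, rfl⟩
    · rintro ⟨a, b, hab, rfl, rfl⟩; linarith
  rw [h, Set.ncard_image_of_injective _ Prod.swap_injective]

theorem main_aux (u v : ℝ) (hu : 0 < u) (hv : 0 < v) (hirr : Irrational (u / v))
    (α β : ℕ) (hα : 0 < α) (hβ : 0 < β)
    (hsum : u + v = α) (hinv : 1 / u + 1 / v = β)
    (hcase : α = 1 ∨ (α = 3 ∧ β = 3) ∨ (α = 2 ∧ β = 4)) (hvu : v < u) :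
    ∀ t : ℕ, 2 * α * ehrhart u v t = β * t ^ 2 + α * β * t + 2 * α := by
  have hiu : Irrational u := irr_u_of u v hv.ne' hirr α hsum
  have hiv : Irrational v := by
    have := hiu.natCast_sub α
    have hveq : v = (α : ℝ) - u := by linarith
    rwa [← hveq] at this
  have hprod : (α : ℝ) = (β : ℝ) * (u * v) := by
    have h := hinv
    field_simp at h
    rw [← hsum]
    linarith
  have hrec := eh_rec hu hv hiu hiv α β hα hsum hinv
  -- base cases
  have hbase : ∀ t : ℕ, t < α → 2 * α * ehrhart u v t = β * t ^ 2 + α * β * t + 2 * α := by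
    rcases hcase with h1 | ⟨h3a, h3b⟩ | ⟨h2a, h2b⟩
    · subst h1
      intro t ht
      interval_cases t
      rw [eh_zero hu hv]
      ring
    · subst h3a; subst h3b
      have hu3 : u = 3 - v := by push_cast at hsum; linarith
      have hv2 : v * v = 3 * v - 1 := by
        have : (3:ℝ) = 3 * (u * v) := by push_cast at hprod; linarith
        nlinarith [this]
      have hb0 : 2 * v < 3 := by rw [hu3] at hvu; linarith
      have hb1 : 1 < 3 * v := by nlinarith [sq_nonneg (v - 1/3)]
      have hb2 : 5 * v ≤ 2 := by nlinarith [sq_nonneg v]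
      have hu2 : (2:ℝ) < u := by rw [hu3]; linarith
      intro t ht
      interval_cases t
      · rw [eh_zero hu hv]; ring
      · rw [eh_big hu hv 1 (by push_cast; linarith)]
        have hfl : ⌊((1:ℕ) : ℝ) / v⌋₊ = 2 := by
          rw [Nat.floor_eq_iff (by positivity)]
          constructor
          · rw [le_div_iff₀ hv]; push_cast; linarith
          · rw [div_lt_iff₀ hv]; push_cast; linarith
        rw [hfl]
        norm_num
      · rw [eh_big hu hv 2 (by push_cast; linarith)]
        have hfl : ⌊((2:ℕ) : ℝ) / v⌋₊ = 5 := by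
          rw [Nat.floor_eq_iff (by positivity)]
          constructor
          · rw [le_div_iff₀ hv]; push_cast; linarith
          · rw [div_lt_iff₀ hv]; push_cast; linarith
        rw [hfl]
        norm_num
    · subst h2a; subst h2b
      have hu2 : u = 2 - v := by push_cast at hsum; linarith
      have hv2 : v * v = 2 * v - 1/2 := by
        have : (2:ℝ) = 4 * (u * v) := by push_cast at hprod; linarith
        nlinarith [this]
      have hb0 : v < 1 := by rw [hu2] at hvu; linarith
      have hb1 : 3 * v ≤ 1 := by nlinarith [sq_nonneg v]
      have hb2 : 1 < 4 * v := by nlinarith [sq_nonneg (v - 1/4)]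
      have hu1 : (1:ℝ) < u := by rw [hu2]; linarith
      intro t ht
      interval_cases t
      · rw [eh_zero hu hv]; ring
      · rw [eh_big hu hv 1 (by push_cast; linarith)]
        have hfl : ⌊((1:ℕ) : ℝ) / v⌋₊ = 3 := by
          rw [Nat.floor_eq_iff (by positivity)]
          constructor
          · rw [le_div_iff₀ hv]; push_cast; linarith
          · rw [div_lt_iff₀ hv]; push_cast; linarith
        rw [hfl]
        norm_num
  -- strong induction
  intro t
  induction t using Nat.strong_induction_on with
  | _ t ih =>
    rcases lt_or_ge t α with h | h
    · exact hbase t h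
    · obtain ⟨s, rfl⟩ : ∃ s, t = s + α := ⟨t - α, by omega⟩
      rw [hrec s]
      have h2 := ih s (by omega)
      calc 2 * α * (ehrhart u v s + β * (s + α))
          = 2 * α * ehrhart u v s + 2 * α * (β * (s + α)) := by ring
        _ = (β * s ^ 2 + α * β * s + 2 * α) + 2 * α * (β * (s + α)) := by rw [h2]
        _ = β * (s + α) ^ 2 + α * β * (s + α) + 2 * α := by ring

end main

/-- If `α = 1` or `(α,β) ∈ {(3,3),(2,4)}`, the admissible irrational triangle
is pseudo-integral with Ehrhart polynomial `(β/(2α))t² + (β/2)t + 1`. -/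
theorem stmt_5 (u v : ℝ) (hu : 0 < u) (hv : 0 < v) (hirr : Irrational (u / v))
    (α β : ℕ) (hα : 0 < α) (hβ : 0 < β)
    (hsum : u + v = α) (hinv : 1 / u + 1 / v = β)
    (hcase : α = 1 ∨ (α = 3 ∧ β = 3) ∨ (α = 2 ∧ β = 4)) :
    ∀ t : ℕ, 0 < t →
      2 * α * ehrhart u v t = β * t ^ 2 + α * β * t + 2 * α := by
  intro t _
  rcases lt_trichotomy v u with hvu | heq | huv
  · exact main_aux u v hu hv hirr α β hα hβ hsum hinv hcase hvu t
  · exfalso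
    apply hirr
    exact ⟨1, by rw [heq]; push_cast; rw [div_self hu.ne']⟩
  · rw [eh_swap]
    exact main_aux v u hv hu (irr_swap u v hirr) α β hα hβ (by linarith)
      (by linarith) hcase huv t
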